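/- arXiv:1010.2471 — 2 statements merged into one kernel-verified Lean document; each statement's English description precedes it below -/
import Mathlib

section
/- Assume that 𝒮 : M_{n×p} → ℂ^m satisfies the strong rank null space property of order k with constant η ∈ (0,1). Let X, Z ∈ M_{n×p} satisfy 𝒮(X) = 𝒮(Z). Then ‖X − Z‖_* ≤ (1+η)/(1−η) · (‖Z‖_* − ‖X‖_* + 2ρ_k(X)_*), where ρ_k(X)_* = min{‖X − Y‖_* : rank(Y) ≤ k} is the best k-rank approximation error in the nuclear norm. -/
open Matrix
open scoped ComplexOrder

namespace IRLSM

/-- Frobenius inner product `⟨X,Y⟩ = Tr(X Yᴴ)`. -/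
noncomputable def frobInner {n p : ℕ} (X Y : Matrix (Fin n) (Fin p) ℂ) : ℂ :=
  Matrix.trace (X * Yᴴ)

/-- Frobenius norm. -/
noncomputable def frobNorm {n p : ℕ} (X : Matrix (Fin n) (Fin p) ℂ) : ℝ :=
  Real.sqrt (∑ i, ∑ j, Complex.normSq (X i j))

/-- Singular values of `X` in nonincreasing order, `sv X 0 = σ₁ ≥ sv X 1 = σ₂ ≥ …`;
indices `≥ n` give `0`. -/
noncomputable def sv {n p : ℕ} (X : Matrix (Fin n) (Fin p) ℂ) : ℕ → ℝ :=
  fun i => ((List.ofFn fun j : Fin n =>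
      Real.sqrt ((Matrix.isHermitian_mul_conjTranspose_self X).eigenvalues j)).mergeSort
      (fun a b => decide (b ≤ a))).getD i 0

/-- Nuclear norm `‖X‖_* = ∑ σᵢ(X)`. -/
noncomputable def nuclearNorm {n p : ℕ} (X : Matrix (Fin n) (Fin p) ℂ) : ℝ :=
  ∑ i : Fin n, sv X (i : ℕ)

/-- Positive square root of a positive semidefinite matrix (junk value `0` otherwise). -/
noncomputable def matSqrt {n : ℕ} (W : Matrix (Fin n) (Fin n) ℂ) : Matrix (Fin n) (Fin n) ℂ :=
  @dite _ W.PosSemidef (Classical.dec _) (fun h => (h.1.eigenvectorUnitary : Matrix (Fin n) (Fin n) ℂ) *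
    Matrix.diagonal ((↑) ∘ Real.sqrt ∘ h.1.eigenvalues) *
    (star h.1.eigenvectorUnitary : Matrix (Fin n) (Fin n) ℂ)) (fun _ => 0)

/-- The functional `𝒥(X,W) = ½(‖W^{1/2}X‖_F² + ‖W^{-1/2}‖_F²)`. -/
noncomputable def Jfun {n p : ℕ} (X : Matrix (Fin n) (Fin p) ℂ)
    (W : Matrix (Fin n) (Fin n) ℂ) : ℝ :=
  (frobNorm (matSqrt W * X) ^ 2 + frobNorm (matSqrt W⁻¹) ^ 2) / 2

/-- The restricted isometry constant `δ_k(𝒮)`: the smallest `δ ≥ 0` such that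
`(1-δ)‖X‖_F² ≤ ‖𝒮(X)‖² ≤ (1+δ)‖X‖_F²` for all `X` of rank at most `k`. -/
noncomputable def ripConst {n p m : ℕ}
    (S : Matrix (Fin n) (Fin p) ℂ →ₗ[ℂ] (Fin m → ℂ)) (k : ℕ) : ℝ :=
  sInf {δ : ℝ | 0 ≤ δ ∧ ∀ X : Matrix (Fin n) (Fin p) ℂ, X.rank ≤ k →
    (1 - δ) * frobNorm X ^ 2 ≤ ∑ i, Complex.normSq (S X i) ∧
      ∑ i, Complex.normSq (S X i) ≤ (1 + δ) * frobNorm X ^ 2}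

/-- The rank null space property of order `k`. -/
def RNSP {n p m : ℕ} (S : Matrix (Fin n) (Fin p) ℂ →ₗ[ℂ] (Fin m → ℂ)) (k : ℕ) : Prop :=
  ∀ H : Matrix (Fin n) (Fin p) ℂ, S H = 0 → H ≠ 0 →
    ∀ H₁ H₂ : Matrix (Fin n) (Fin p) ℂ, H = H₁ + H₂ → H₁.rank ≤ k →
      nuclearNorm H₁ < nuclearNorm H₂

/-- The strong rank null space property of order `k` with constant `η`. -/
def SRNSP {n p m : ℕ} (S : Matrix (Fin n) (Fin p) ℂ →ₗ[ℂ] (Fin m → ℂ)) (k : ℕ) (η : ℝ) : Prop :=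
  ∀ X : Matrix (Fin n) (Fin p) ℂ, S X = 0 → X ≠ 0 →
    ∀ X₁ X₂ : Matrix (Fin n) (Fin p) ℂ, X = X₁ + X₂ → X₁.rank ≤ k →
      ∃ H₁ H₂ : Matrix (Fin n) (Fin p) ℂ, X = H₁ + H₂ ∧ H₁.rank ≤ 2 * k ∧
        frobInner H₁ H₂ = 0 ∧ X₁ * H₂ᴴ = 0 ∧ X₁ᴴ * H₂ = 0 ∧
        nuclearNorm H₁ ≤ η * nuclearNorm H₂

/-- Best `k`-rank approximation error in the nuclear norm, `ρ_k(X)_*`. -/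
noncomputable def rhoNuc {n p : ℕ} (k : ℕ) (X : Matrix (Fin n) (Fin p) ℂ) : ℝ :=
  sInf ((fun Z => nuclearNorm (X - Z)) '' {Z : Matrix (Fin n) (Fin p) ℂ | Z.rank ≤ k})

/-- `j^ε(u) = |u|` for `|u| ≥ ε` and `(u² + ε²)/(2ε)` otherwise. -/
noncomputable def jeps (ε u : ℝ) : ℝ :=
  if ε ≤ |u| then |u| else (u ^ 2 + ε ^ 2) / (2 * ε)

/-- The functional `𝒥_ε(X) = ∑ᵢ j^ε(σᵢ(X))`. -/
noncomputable def Jeps {n p : ℕ} (ε : ℝ) (X : Matrix (Fin n) (Fin p) ℂ) : ℝ :=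
  ∑ i : Fin n, jeps ε (sv X (i : ℕ))

/-- `(X^ℓ, W^ℓ, ε_ℓ)_ℓ` is an output of the IRLS-M algorithm with measurement map `S`,
data `M`, parameters `γ > 0` and `K`.  Here `X (ℓ+1)` is the weighted least squares
minimizer for the weight `W ℓ`, `ε (ℓ+1) = min (ε ℓ) (γ σ_{K+1}(X^{ℓ+1}))`, and
`W (ℓ+1)` is built from an eigendecomposition of `X^{ℓ+1}(X^{ℓ+1})ᴴ` together with the
`ε`-stabilization of the singular values.  If `ε` reaches `0` the algorithm stops. -/
structure IsIRLSM {n p m : ℕ} (S : Matrix (Fin n) (Fin p) ℂ →ₗ[ℂ] (Fin m → ℂ))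
    (M : Fin m → ℂ) (γ : ℝ) (K : ℕ)
    (X : ℕ → Matrix (Fin n) (Fin p) ℂ)
    (W : ℕ → Matrix (Fin n) (Fin n) ℂ)
    (ε : ℕ → ℝ) : Prop where
  w_init : W 0 = 1
  eps_init : ε 0 = 1
  x_feasible : ∀ ℓ : ℕ, ε ℓ ≠ 0 → S (X (ℓ + 1)) = M
  x_min : ∀ ℓ : ℕ, ε ℓ ≠ 0 → ∀ Y : Matrix (Fin n) (Fin p) ℂ, S Y = M →
    frobNorm (matSqrt (W ℓ) * X (ℓ + 1)) ^ 2 ≤ frobNorm (matSqrt (W ℓ) * Y) ^ 2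
  eps_update : ∀ ℓ : ℕ, ε ℓ ≠ 0 → ε (ℓ + 1) = min (ε ℓ) (γ * sv (X (ℓ + 1)) K)
  w_update : ∀ ℓ : ℕ, ε ℓ ≠ 0 → ε (ℓ + 1) ≠ 0 →
    ∃ U : Matrix (Fin n) (Fin n) ℂ, U * Uᴴ = 1 ∧ Uᴴ * U = 1 ∧
      X (ℓ + 1) * (X (ℓ + 1))ᴴ =
        U * Matrix.diagonal (fun i : Fin n => ((sv (X (ℓ + 1)) (i : ℕ) : ℂ)) ^ 2) * Uᴴ ∧
      W (ℓ + 1) =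
        U * Matrix.diagonal
            (fun i : Fin n => (((max (sv (X (ℓ + 1)) (i : ℕ)) (ε (ℓ + 1)) : ℝ) : ℂ))⁻¹) * Uᴴ
  w_stop : ∀ ℓ : ℕ, ε ℓ ≠ 0 → ε (ℓ + 1) = 0 → W (ℓ + 1) = W ℓ
  stopped : ∀ ℓ : ℕ, ε ℓ = 0 → X (ℓ + 1) = X ℓ ∧ W (ℓ + 1) = W ℓ ∧ ε (ℓ + 1) = 0

section core
variable {n p : ℕ}

private noncomputable def gU (X : Matrix (Fin n) (Fin p) ℂ) : Matrix (Fin n) (Fin n) ℂ :=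
  ((Matrix.isHermitian_mul_conjTranspose_self X).eigenvectorUnitary : Matrix (Fin n) (Fin n) ℂ)

private noncomputable def gev (X : Matrix (Fin n) (Fin p) ℂ) : Fin n → ℝ :=
  (Matrix.isHermitian_mul_conjTranspose_self X).eigenvalues

private lemma gU_mul_conjT (X : Matrix (Fin n) (Fin p) ℂ) : gU X * (gU X)ᴴ = 1 :=
  (Matrix.mem_unitaryGroup_iff).mp
    ((Matrix.isHermitian_mul_conjTranspose_self X).eigenvectorUnitary).2

private lemma gU_conjT_mul (X : Matrix (Fin n) (Fin p) ℂ) : (gU X)ᴴ * gU X = 1 :=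
  (Matrix.mem_unitaryGroup_iff').mp
    ((Matrix.isHermitian_mul_conjTranspose_self X).eigenvectorUnitary).2

private lemma gev_nonneg (X : Matrix (Fin n) (Fin p) ℂ) (i : Fin n) : 0 ≤ gev X i :=
  (Matrix.posSemidef_self_mul_conjTranspose X).eigenvalues_nonneg i

private lemma spectral (X : Matrix (Fin n) (Fin p) ℂ) :
    X * Xᴴ = gU X * diagonal (fun i => (gev X i : ℂ)) * (gU X)ᴴ :=
  (Matrix.isHermitian_mul_conjTranspose_self X).spectral_theorem

/-- conjugation product collapse -/
private lemma conj_mul_conj (X : Matrix (Fin n) (Fin p) ℂ) (d e : Fin n → ℂ) :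
    (gU X * diagonal d * (gU X)ᴴ) * (gU X * diagonal e * (gU X)ᴴ)
      = gU X * diagonal (fun i => d i * e i) * (gU X)ᴴ := by
  rw [← diagonal_mul_diagonal]
  simp only [mul_assoc]
  rw [← mul_assoc ((gU X)ᴴ) (gU X), gU_conjT_mul, one_mul]

private lemma trace_conj (X : Matrix (Fin n) (Fin p) ℂ) (d : Fin n → ℂ) :
    trace (gU X * diagonal d * (gU X)ᴴ) = ∑ i, d i := by
  rw [trace_mul_cycle, gU_conjT_mul, one_mul, trace_diagonal]

private noncomputable def pihalf (X : Matrix (Fin n) (Fin p) ℂ) : Matrix (Fin n) (Fin n) ℂ :=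
  gU X * diagonal (fun i => (((Real.sqrt (gev X i))⁻¹ : ℝ) : ℂ)) * (gU X)ᴴ

private noncomputable def dualW (X : Matrix (Fin n) (Fin p) ℂ) : Matrix (Fin p) (Fin n) ℂ :=
  Xᴴ * pihalf X

private lemma pihalf_herm (X : Matrix (Fin n) (Fin p) ℂ) : (pihalf X)ᴴ = pihalf X := by
  rw [pihalf, conjTranspose_mul, conjTranspose_mul, conjTranspose_conjTranspose,
    diagonal_conjTranspose, ← mul_assoc]
  simp [Pi.star_def, Complex.conj_ofReal]

private noncomputable def piv (X : Matrix (Fin n) (Fin p) ℂ) (i : Fin n) : ℝ :=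
  gev X i * ((Real.sqrt (gev X i))⁻¹) ^ 2

private lemma piv_eq (X : Matrix (Fin n) (Fin p) ℂ) (i : Fin n) :
    piv X i = if gev X i = 0 then 0 else 1 := by
  rcases eq_or_ne (gev X i) 0 with h | h
  · simp [piv, h]
  · have hpos : 0 < gev X i := lt_of_le_of_ne (gev_nonneg X i) (Ne.symm h)
    rw [piv, if_neg h, inv_pow, Real.sq_sqrt (gev_nonneg X i), mul_inv_cancel₀ h]

private lemma mul_inv_sqrt {a : ℝ} (ha : 0 ≤ a) : a * (Real.sqrt a)⁻¹ = Real.sqrt a := by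
  rcases ha.eq_or_lt with h | h
  · simp [← h]
  · nth_rewrite 1 [← Real.mul_self_sqrt ha]
    exact mul_inv_cancel_right₀ (Real.sqrt_ne_zero'.mpr h) _

private lemma X_mul_dualW (X : Matrix (Fin n) (Fin p) ℂ) :
    X * dualW X = gU X * diagonal (fun i => ((Real.sqrt (gev X i) : ℝ) : ℂ)) * (gU X)ᴴ := by
  have hd : ∀ i : Fin n, ((gev X i : ℝ) : ℂ) * (((Real.sqrt (gev X i))⁻¹ : ℝ) : ℂ)
      = ((Real.sqrt (gev X i) : ℝ) : ℂ) := fun i => by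
    rw [← Complex.ofReal_mul, mul_inv_sqrt (gev_nonneg X i)]
  rw [dualW, ← Matrix.mul_assoc, spectral X, pihalf]
  simp only [conj_mul_conj, hd]

private lemma trace_dualW (X : Matrix (Fin n) (Fin p) ℂ) :
    (trace (X * dualW X)).re = ∑ i, Real.sqrt (gev X i) := by
  rw [X_mul_dualW, trace_conj, ← Complex.ofReal_sum, Complex.ofReal_re]

private lemma Q_eq (X : Matrix (Fin n) (Fin p) ℂ) :
    (dualW X)ᴴ * dualW X = gU X * diagonal (fun i => ((piv X i : ℝ) : ℂ)) * (gU X)ᴴ := by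
  rw [dualW, conjTranspose_mul, conjTranspose_conjTranspose, pihalf_herm,
    Matrix.mul_assoc, ← Matrix.mul_assoc X Xᴴ, ← Matrix.mul_assoc, spectral X, pihalf]
  have hd : ∀ i : Fin n, (((Real.sqrt (gev X i))⁻¹ : ℝ) : ℂ) * ((gev X i : ℝ) : ℂ)
      * (((Real.sqrt (gev X i))⁻¹ : ℝ) : ℂ) = ((piv X i : ℝ) : ℂ) := fun i => by
    simp only [piv]; push_cast; ring
  simp only [conj_mul_conj, hd]
end core

section core2
variable {n p : ℕ}

private lemma psd_diag_nonneg {N : ℕ} {M : Matrix (Fin N) (Fin N) ℂ} (hM : M.PosSemidef)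
    (i : Fin N) : 0 ≤ M i i := by
  exact hM.diag_nonneg

private lemma cs_bound {N : ℕ} (a b : Fin N → ℝ) (ha : ∀ i, 0 ≤ a i) (hb : ∀ i, 0 ≤ b i) :
    ∑ i, a i * b i ≤ Real.sqrt (∑ i, a i ^ 2) * Real.sqrt (∑ i, b i ^ 2) := by
  rw [← Real.sqrt_mul (Finset.sum_nonneg fun i _ => sq_nonneg _)]
  rw [Real.le_sqrt (Finset.sum_nonneg fun i _ => mul_nonneg (ha i) (hb i))
    (mul_nonneg (Finset.sum_nonneg fun i _ => sq_nonneg _)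
      (Finset.sum_nonneg fun i _ => sq_nonneg _))]
  exact Finset.sum_mul_sq_le_sq_mul_sq Finset.univ a b

private lemma one_sub_conj_diag_psd (X : Matrix (Fin n) (Fin p) ℂ) (d : Fin n → ℝ)
    (hd0 : ∀ i, 0 ≤ d i) (hd1 : ∀ i, d i ≤ 1) :
    (1 - gU X * diagonal (fun i => ((d i : ℝ) : ℂ)) * (gU X)ᴴ).PosSemidef := by
  have h1 : (1 : Matrix (Fin n) (Fin n) ℂ)
      - gU X * diagonal (fun i => ((d i : ℝ) : ℂ)) * (gU X)ᴴ
      = gU X * diagonal (fun i => (((1 - d i : ℝ)) : ℂ)) * (gU X)ᴴ := by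
    have hdd : (fun i => (((1 - d i : ℝ)) : ℂ)) = (fun i => (1:ℂ) - ((d i : ℝ) : ℂ)) := by
      funext i; push_cast; ring
    rw [hdd, ← diagonal_sub, mul_sub, sub_mul]
    congr 1
    rw [show diagonal (fun _ : Fin n => (1:ℂ)) = (1 : Matrix (Fin n) (Fin n) ℂ) from diagonal_one,
      mul_one, gU_mul_conjT]
  rw [h1]
  refine PosSemidef.mul_mul_conjTranspose_same ?_ (gU X)
  refine PosSemidef.diagonal fun i => ?_
  simp only [Pi.zero_apply, Complex.zero_le_real]
  linarith [hd1 i]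

private lemma piv_nonneg (X : Matrix (Fin n) (Fin p) ℂ) (i : Fin n) : 0 ≤ piv X i := by
  rw [piv_eq]; split <;> norm_num

private lemma piv_le_one (X : Matrix (Fin n) (Fin p) ℂ) (i : Fin n) : piv X i ≤ 1 := by
  rw [piv_eq]; split <;> norm_num

private lemma contraction_dualW (X : Matrix (Fin n) (Fin p) ℂ) :
    (1 - (dualW X)ᴴ * dualW X).PosSemidef := by
  rw [Q_eq]
  exact one_sub_conj_diag_psd X (piv X) (piv_nonneg X) (piv_le_one X)

private lemma QL {q : ℕ} (X : Matrix (Fin n) (Fin p) ℂ) (M : Matrix (Fin n) (Fin q) ℂ)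
    (h : X * Xᴴ * M = 0) : (dualW X)ᴴ * dualW X * M = 0 := by
  have h0 : gU X * (diagonal (fun i => ((gev X i : ℝ) : ℂ)) * ((gU X)ᴴ * M)) = 0 := by
    rw [← Matrix.mul_assoc, ← Matrix.mul_assoc, ← spectral X]
    exact h
  have h1 : diagonal (fun i => ((gev X i : ℝ) : ℂ)) * ((gU X)ᴴ * M) = 0 := by
    conv_lhs => rw [← Matrix.one_mul (diagonal (fun i => ((gev X i : ℝ) : ℂ)) * ((gU X)ᴴ * M)),
      ← gU_conjT_mul X, Matrix.mul_assoc]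
    rw [h0, Matrix.mul_zero]
  have h2 : diagonal (fun i => ((piv X i : ℝ) : ℂ)) * ((gU X)ᴴ * M) = 0 := by
    ext i j
    have hij := congrFun (congrFun h1 i) j
    rw [diagonal_mul] at hij
    rw [diagonal_mul, Matrix.zero_apply]
    rw [Matrix.zero_apply] at hij
    rcases eq_or_ne (gev X i) 0 with hz | hz
    · rw [piv_eq, if_pos hz]; simp
    · have hcz : ((gev X i : ℝ) : ℂ) ≠ 0 := by exact_mod_cast hz
      have hMij : ((gU X)ᴴ * M) i j = 0 := by
        rcases mul_eq_zero.mp hij with h' | h'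
        · exact absurd h' hcz
        · exact h'
      rw [hMij, mul_zero]
  rw [Q_eq, Matrix.mul_assoc, Matrix.mul_assoc, h2, Matrix.mul_zero]

private lemma Q_herm (X : Matrix (Fin n) (Fin p) ℂ) :
    ((dualW X)ᴴ * dualW X)ᴴ = (dualW X)ᴴ * dualW X :=
  (Matrix.isHermitian_conjTranspose_mul_self (dualW X)).eq

private lemma QR {q : ℕ} (X : Matrix (Fin n) (Fin p) ℂ) (M : Matrix (Fin q) (Fin n) ℂ)
    (h : M * (X * Xᴴ) = 0) : M * ((dualW X)ᴴ * dualW X) = 0 := by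
  have h' : X * Xᴴ * Mᴴ = 0 := by
    have h2 := congrArg conjTranspose h
    rw [conjTranspose_mul, (Matrix.isHermitian_mul_conjTranspose_self X).eq,
      conjTranspose_zero] at h2
    exact h2
  have h3 := congrArg conjTranspose (QL X Mᴴ h')
  rw [conjTranspose_mul, conjTranspose_conjTranspose, Q_herm, conjTranspose_zero] at h3
  exact h3

private lemma Q_idem (X : Matrix (Fin n) (Fin p) ℂ) :
    ((dualW X)ᴴ * dualW X) * ((dualW X)ᴴ * dualW X) = (dualW X)ᴴ * dualW X := by
  have hd : ∀ i : Fin n, ((piv X i : ℝ) : ℂ) * ((piv X i : ℝ) : ℂ) = ((piv X i : ℝ) : ℂ) := by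
    intro i
    rw [piv_eq]
    split <;> norm_num
  rw [Q_eq]
  simp only [conj_mul_conj, hd]

private lemma re_trace_le (Y : Matrix (Fin n) (Fin p) ℂ) (P : Matrix (Fin p) (Fin n) ℂ)
    (hP : (1 - Pᴴ * P).PosSemidef) :
    (trace (Y * P)).re ≤ ∑ i, Real.sqrt (gev Y i) := by
  classical
  set G : Matrix (Fin n) (Fin p) ℂ := (gU Y)ᴴ * Y with hG
  have hYG : Y = gU Y * G := by rw [hG, ← Matrix.mul_assoc, gU_mul_conjT, Matrix.one_mul]
  have hGG : G * Gᴴ = diagonal (fun i => ((gev Y i : ℝ) : ℂ)) := by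
    calc G * Gᴴ = (gU Y)ᴴ * (Y * Yᴴ) * gU Y := by
          rw [hG, conjTranspose_mul, conjTranspose_conjTranspose, Matrix.mul_assoc,
            ← Matrix.mul_assoc Y Yᴴ, ← Matrix.mul_assoc]
      _ = diagonal (fun i => ((gev Y i : ℝ) : ℂ)) := by
          rw [spectral Y]
          simp only [← Matrix.mul_assoc]
          rw [gU_conjT_mul, one_mul, Matrix.mul_assoc, gU_conjT_mul, mul_one]
  have hrow : ∀ i, ∑ j, Complex.normSq (G i j) = gev Y i := by
    intro i
    have h0 := congrFun (congrFun hGG i) i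
    rw [mul_apply, diagonal_apply_eq] at h0
    simp only [conjTranspose_apply, Complex.star_def, Complex.mul_conj] at h0
    exact_mod_cast h0
  have hcol : ∀ i, ∑ j, Complex.normSq ((P * gU Y) j i) ≤ 1 := by
    intro i
    have hpsd := hP.conjTranspose_mul_mul_same (gU Y)
    have hdiag := psd_diag_nonneg hpsd i
    have hexp : (gU Y)ᴴ * (1 - Pᴴ * P) * gU Y = 1 - ((P * gU Y)ᴴ * (P * gU Y)) := by
      rw [mul_sub, sub_mul, mul_one, gU_conjT_mul]
      congr 1
      rw [conjTranspose_mul]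
      simp only [Matrix.mul_assoc]
    rw [hexp] at hdiag
    have hentry : ((P * gU Y)ᴴ * (P * gU Y)) i i
        = ((∑ j, Complex.normSq ((P * gU Y) j i) : ℝ) : ℂ) := by
      rw [mul_apply]
      push_cast
      refine Finset.sum_congr rfl fun j _ => ?_
      rw [conjTranspose_apply, Complex.star_def, mul_comm, Complex.mul_conj]
    rw [Matrix.sub_apply, one_apply_eq, hentry] at hdiag
    have : ((1 - ∑ j, Complex.normSq ((P * gU Y) j i) : ℝ) : ℂ)
        = 1 - ((∑ j, Complex.normSq ((P * gU Y) j i) : ℝ) : ℂ) := by push_cast; ring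
    rw [← this, Complex.zero_le_real] at hdiag
    linarith
  have htr : trace (Y * P) = trace (G * (P * gU Y)) := by
    conv_lhs => rw [hYG]
    rw [Matrix.mul_assoc, trace_mul_comm, Matrix.mul_assoc]
  rw [htr]
  have hre : (trace (G * (P * gU Y))).re = ∑ i, ((G * (P * gU Y)) i i).re := by
    rw [Matrix.trace, Complex.re_sum]
    rfl
  rw [hre]
  refine Finset.sum_le_sum fun i _ => ?_
  calc ((G * (P * gU Y)) i i).re ≤ ‖(G * (P * gU Y)) i i‖ := Complex.re_le_norm _
    _ ≤ ∑ j, ‖G i j‖ * ‖(P * gU Y) j i‖ := by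
        rw [mul_apply]
        refine le_trans (norm_sum_le _ _) (le_of_eq ?_)
        exact Finset.sum_congr rfl fun j _ => norm_mul _ _
    _ ≤ Real.sqrt (∑ j, (‖G i j‖) ^ 2)
        * Real.sqrt (∑ j, (‖(P * gU Y) j i‖) ^ 2) :=
        cs_bound _ _ (fun j => norm_nonneg _) (fun j => norm_nonneg _)
    _ ≤ Real.sqrt (gev Y i) * 1 := by
        have e1 : ∑ j, (‖G i j‖) ^ 2 = gev Y i := by
          rw [← hrow i]
          exact Finset.sum_congr rfl fun j _ => Complex.sq_norm _
        have e2 : ∑ j, (‖(P * gU Y) j i‖) ^ 2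
            = ∑ j, Complex.normSq ((P * gU Y) j i) :=
          Finset.sum_congr rfl fun j _ => Complex.sq_norm _
        rw [e1, e2]
        exact mul_le_mul_of_nonneg_left (Real.sqrt_le_one.mpr (hcol i)) (Real.sqrt_nonneg _)
    _ = Real.sqrt (gev Y i) := mul_one _

end core2

section core3
variable {n p : ℕ}

private lemma sum_getD_eq {N : ℕ} (l : List ℝ) (hl : l.length = N) :
    ∑ i : Fin N, l.getD (i : ℕ) 0 = l.sum := by
  subst hl
  conv_rhs => rw [← List.ofFn_getElem (xs := l)]
  rw [List.sum_ofFn]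
  exact Finset.sum_congr rfl fun i _ => List.getD_eq_getElem l 0 i.isLt

private lemma nuclearNorm_eq_gev (X : Matrix (Fin n) (Fin p) ℂ) :
    nuclearNorm X = ∑ j : Fin n, Real.sqrt (gev X j) := by
  unfold nuclearNorm sv
  rw [sum_getD_eq _ (by simp), (List.mergeSort_perm _ _).sum_eq, List.sum_ofFn]
  rfl

private lemma nuclearNorm_nonneg (X : Matrix (Fin n) (Fin p) ℂ) : 0 ≤ nuclearNorm X := by
  rw [nuclearNorm_eq_gev]; positivity

private lemma eigenvalues_congr {N : ℕ} {A B : Matrix (Fin N) (Fin N) ℂ}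
    (hA : A.IsHermitian) (hB : B.IsHermitian) (h : A = B) :
    hA.eigenvalues = hB.eigenvalues := by subst h; rfl

private lemma nuclearNorm_gram_congr (X Y : Matrix (Fin n) (Fin p) ℂ)
    (h : X * Xᴴ = Y * Yᴴ) : nuclearNorm X = nuclearNorm Y := by
  rw [nuclearNorm_eq_gev, nuclearNorm_eq_gev]
  unfold gev
  rw [eigenvalues_congr _ _ h]

private lemma nuclearNorm_neg (X : Matrix (Fin n) (Fin p) ℂ) :
    nuclearNorm (-X) = nuclearNorm X :=
  nuclearNorm_gram_congr _ _ (by simp)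

private lemma nuclearNorm_zero : nuclearNorm (0 : Matrix (Fin n) (Fin p) ℂ) = 0 := by
  rw [nuclearNorm_eq_gev]
  refine Finset.sum_eq_zero fun j _ => ?_
  unfold gev
  rw [eigenvalues_congr _ (Matrix.isHermitian_zero) (by simp)]
  have h := (Matrix.isHermitian_zero (n := Fin n) (α := ℂ)).eigenvalues_eq j
  simp at h
  rw [h]; exact Real.sqrt_zero

private lemma nuclear_triangle (A B : Matrix (Fin n) (Fin p) ℂ) :
    nuclearNorm (A + B) ≤ nuclearNorm A + nuclearNorm B := by
  have hc := contraction_dualW (A + B)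
  have h1 : (trace ((A + B) * dualW (A + B))).re = nuclearNorm (A + B) := by
    rw [trace_dualW, nuclearNorm_eq_gev]
  have h2 : (trace (A * dualW (A + B))).re ≤ nuclearNorm A := by
    rw [nuclearNorm_eq_gev]; exact re_trace_le A _ hc
  have h3 : (trace (B * dualW (A + B))).re ≤ nuclearNorm B := by
    rw [nuclearNorm_eq_gev]; exact re_trace_le B _ hc
  have hsplit : trace ((A + B) * dualW (A + B))
      = trace (A * dualW (A + B)) + trace (B * dualW (A + B)) := by
    rw [Matrix.add_mul, trace_add]
  rw [← h1, hsplit, Complex.add_re]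
  linarith

private lemma nuclear_superadd (A B : Matrix (Fin n) (Fin p) ℂ)
    (h1 : A * Bᴴ = 0) (h2 : Aᴴ * B = 0) :
    nuclearNorm A + nuclearNorm B ≤ nuclearNorm (A + B) := by
  have h1' : B * Aᴴ = 0 := by
    have := congrArg conjTranspose h1
    rwa [conjTranspose_mul, conjTranspose_conjTranspose, conjTranspose_zero] at this
  have c1 : (dualW A)ᴴ * dualW B = 0 := by
    rw [dualW, dualW, conjTranspose_mul, conjTranspose_conjTranspose, pihalf_herm,
      Matrix.mul_assoc, ← Matrix.mul_assoc A Bᴴ, h1, Matrix.zero_mul, Matrix.mul_zero]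
  have c2 : (dualW B)ᴴ * dualW A = 0 := by
    rw [dualW, dualW, conjTranspose_mul, conjTranspose_conjTranspose, pihalf_herm,
      Matrix.mul_assoc, ← Matrix.mul_assoc B Aᴴ, h1', Matrix.zero_mul, Matrix.mul_zero]
  have qa_b : (dualW A)ᴴ * dualW A * B = 0 :=
    QL A B (by rw [Matrix.mul_assoc, h2, Matrix.mul_zero])
  have qaqb : (dualW A)ᴴ * dualW A * ((dualW B)ᴴ * dualW B) = 0 := by
    apply QR B
    rw [← Matrix.mul_assoc, qa_b, Matrix.zero_mul]
  have qbqa : (dualW B)ᴴ * dualW B * ((dualW A)ᴴ * dualW A) = 0 := by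
    have := congrArg conjTranspose qaqb
    rwa [conjTranspose_mul, Q_herm, Q_herm, conjTranspose_zero] at this
  have hPP : (dualW A + dualW B)ᴴ * (dualW A + dualW B)
      = (dualW A)ᴴ * dualW A + (dualW B)ᴴ * dualW B := by
    rw [conjTranspose_add, Matrix.add_mul, Matrix.mul_add, Matrix.mul_add, c1, c2]
    abel
  have hsq : ((dualW A)ᴴ * dualW A + (dualW B)ᴴ * dualW B)
      * ((dualW A)ᴴ * dualW A + (dualW B)ᴴ * dualW B)
      = (dualW A)ᴴ * dualW A + (dualW B)ᴴ * dualW B := by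
    rw [Matrix.add_mul, Matrix.mul_add, Matrix.mul_add, Q_idem A, Q_idem B, qaqb, qbqa]
    abel
  have hR : (1 - (dualW A + dualW B)ᴴ * (dualW A + dualW B)).PosSemidef := by
    rw [hPP]
    set Sm := (dualW A)ᴴ * dualW A + (dualW B)ᴴ * dualW B with hSm
    have hSherm : Smᴴ = Sm := by
      rw [hSm, conjTranspose_add, Q_herm, Q_herm]
    have hRR : (1 - Sm) * (1 - Sm) = 1 - Sm := by
      have expand : (1 - Sm) * (1 - Sm) = 1 - Sm - Sm + Sm * Sm := by noncomm_ring
      rw [expand, hsq]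
      abel
    have hRherm : (1 - Sm)ᴴ = 1 - Sm := by
      rw [conjTranspose_sub, conjTranspose_one, hSherm]
    have : (1 - Sm) = (1 - Sm) * (1 - Sm)ᴴ := by rw [hRherm, hRR]
    rw [this]
    exact Matrix.posSemidef_self_mul_conjTranspose _
  have tAB : A * dualW B = 0 := by
    rw [dualW, ← Matrix.mul_assoc, h1, Matrix.zero_mul]
  have tBA : B * dualW A = 0 := by
    rw [dualW, ← Matrix.mul_assoc, h1', Matrix.zero_mul]
  have ht : (trace ((A + B) * (dualW A + dualW B))).re
      = nuclearNorm A + nuclearNorm B := by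
    have hexp : (A + B) * (dualW A + dualW B)
        = A * dualW A + B * dualW B := by
      rw [Matrix.add_mul, Matrix.mul_add, Matrix.mul_add, tAB, tBA]
      abel
    rw [hexp, trace_add, Complex.add_re, trace_dualW, trace_dualW,
      nuclearNorm_eq_gev, nuclearNorm_eq_gev]
  have hle := re_trace_le (A + B) (dualW A + dualW B) hR
  rw [ht] at hle
  rw [nuclearNorm_eq_gev (A + B)]
  exact hle

end core3


set_option maxHeartbeats 1000000 in
/-- inverse triangle inequality under the strong rank null space property. -/
theorem statement10 {n p m : ℕ} (hnp : n ≤ p)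
    (S : Matrix (Fin n) (Fin p) ℂ →ₗ[ℂ] (Fin m → ℂ)) (k : ℕ) (η : ℝ) (hη0 : 0 < η) (hη1 : η < 1)
    (hS : SRNSP S k η)
    (X Z : Matrix (Fin n) (Fin p) ℂ) (h : S X = S Z) :
    nuclearNorm (X - Z) ≤
      (1 + η) / (1 - η) * (nuclearNorm Z - nuclearNorm X + 2 * rhoNuc k X) := by
  have h1η : (0:ℝ) < 1 - η := by linarith
  have h2η : (0:ℝ) < 1 + η := by linarith
  have hC : (0:ℝ) < (1 + η) / (1 - η) := div_pos h2η h1η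
  have hρ0 : 0 ≤ rhoNuc k X := by
    apply Real.sInf_nonneg
    rintro x ⟨Y, hY, rfl⟩
    exact nuclearNorm_nonneg _
  by_cases hXZ : X - Z = 0
  · rw [hXZ, nuclearNorm_zero]
    have hxz : X = Z := sub_eq_zero.mp hXZ
    rw [← hxz]
    have e0 : nuclearNorm X - nuclearNorm X + 2 * rhoNuc k X = 2 * rhoNuc k X := by ring
    rw [e0]
    exact mul_nonneg hC.le (by linarith)
  · refine le_of_forall_pos_le_add fun ε hε => ?_
    have hδpos : 0 < ε * (1 - η) / (2 * (1 + η)) := div_pos (mul_pos hε h1η) (by linarith)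
    have hne :
        ((fun W => nuclearNorm (X - W)) ''
          {W : Matrix (Fin n) (Fin p) ℂ | W.rank ≤ k}).Nonempty :=
      ⟨nuclearNorm (X - 0), ⟨0, by simp, rfl⟩⟩
    obtain ⟨v, ⟨Y, hYr, rfl⟩, hv⟩ := Real.lt_sInf_add_pos hne hδpos
    have hv' : nuclearNorm (X - Y) < rhoNuc k X + ε * (1 - η) / (2 * (1 + η)) := hv
    have hker : S (X - Z) = 0 := by rw [map_sub, h, sub_self]
    obtain ⟨H₁, H₂, hsum, hrk, hip, hz1, hz2, hηb⟩ :=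
      hS (X - Z) hker hXZ Y (X - Z - Y) (by abel) hYr
    have hH2 : H₂ = X - Z - H₁ := by rw [hsum]; abel
    have s1 : nuclearNorm (X - Z) ≤ nuclearNorm H₁ + nuclearNorm H₂ := by
      rw [hsum]; exact nuclear_triangle _ _
    have hA1 : Y * (-H₂)ᴴ = 0 := by rw [conjTranspose_neg, Matrix.mul_neg, hz1, neg_zero]
    have hA2 : Yᴴ * -H₂ = 0 := by rw [Matrix.mul_neg, hz2, neg_zero]
    have s3 := nuclear_superadd Y (-H₂) hA1 hA2
    rw [nuclearNorm_neg, ← sub_eq_add_neg] at s3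
    have hid : Y - H₂ = Z + (H₁ - (X - Y)) := by rw [hH2]; abel
    have s4 : nuclearNorm (Y - H₂) ≤ nuclearNorm Z + nuclearNorm (H₁ - (X - Y)) := by
      rw [hid]; exact nuclear_triangle _ _
    have s5 := nuclear_triangle H₁ (-(X - Y))
    rw [nuclearNorm_neg, ← sub_eq_add_neg] at s5
    have s7 := nuclear_triangle (X - Y) Y
    have e7 : X - Y + Y = X := by abel
    rw [e7] at s7
    have key : (1 - η) * nuclearNorm H₂
        ≤ nuclearNorm Z - nuclearNorm X + 2 * nuclearNorm (X - Y) := by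
      nlinarith [s3, s4, s5, s7, hηb]
    have main : nuclearNorm (X - Z) ≤ (1 + η) * nuclearNorm H₂ := by nlinarith [s1, hηb]
    have hne1 : (1 : ℝ) - η ≠ 0 := ne_of_gt h1η
    have hne2 : (1 : ℝ) + η ≠ 0 := ne_of_gt h2η
    calc nuclearNorm (X - Z) ≤ (1 + η) * nuclearNorm H₂ := main
      _ ≤ (1 + η) * ((nuclearNorm Z - nuclearNorm X
            + 2 * (rhoNuc k X + ε * (1 - η) / (2 * (1 + η)))) / (1 - η)) := by
          refine mul_le_mul_of_nonneg_left ?_ (by linarith)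
          rw [le_div_iff₀ h1η]
          nlinarith [key, hv']
      _ = (1 + η) / (1 - η) * (nuclearNorm Z - nuclearNorm X + 2 * rhoNuc k X) + ε := by
          field_simp
          ring

end IRLSM
end

section
/- Let 𝒮 : M_{n×p} → ℂ^m be a linear map with restricted isometry constant δ_k(𝒮) > 0. Then for any two matrices X, Y ∈ M_{n×p} with rank(X) + rank(Y) ≤ k and ⟨X,Y⟩ = 0 (Frobenius inner product), one has |⟨𝒮(X), 𝒮(Y)⟩| ≤ δ_k(𝒮)·‖X‖_F·‖Y‖_F. -/
open Matrix
open scoped ComplexOrder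

namespace IRLSM

section Aux

variable {n p m : ℕ}

private lemma sumSq_nonneg' (X : Matrix (Fin n) (Fin p) ℂ) :
    (0:ℝ) ≤ ∑ i, ∑ j, Complex.normSq (X i j) :=
  Finset.sum_nonneg fun _ _ => Finset.sum_nonneg fun _ _ => Complex.normSq_nonneg _

private lemma frobNorm_nonneg' (X : Matrix (Fin n) (Fin p) ℂ) : 0 ≤ frobNorm X :=
  Real.sqrt_nonneg _

private lemma frobNorm_sq' (X : Matrix (Fin n) (Fin p) ℂ) :
    frobNorm X ^ 2 = ∑ i, ∑ j, Complex.normSq (X i j) :=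
  Real.sq_sqrt (sumSq_nonneg' X)

private lemma frobInner_eq' (X Y : Matrix (Fin n) (Fin p) ℂ) :
    frobInner X Y = ∑ i, ∑ j, X i j * (starRingEnd ℂ) (Y i j) := by
  simp [frobInner, Matrix.trace, Matrix.diag, Matrix.mul_apply, Matrix.conjTranspose_apply]

private lemma frobNorm_eq_zero' {X : Matrix (Fin n) (Fin p) ℂ} (h : frobNorm X = 0) : X = 0 := by
  have h2 : ∑ i, ∑ j, Complex.normSq (X i j) = 0 := by
    have := frobNorm_sq' X
    rw [h] at this
    linarith [this]
  ext i j
  have hi := (Finset.sum_eq_zero_iff_of_nonneg (fun i _ =>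
    Finset.sum_nonneg fun j _ => Complex.normSq_nonneg (X i j))).mp h2 i (Finset.mem_univ i)
  have hj := (Finset.sum_eq_zero_iff_of_nonneg (fun j _ =>
    Complex.normSq_nonneg (X i j))).mp hi j (Finset.mem_univ j)
  simpa using Complex.normSq_eq_zero.mp hj

private lemma frobNorm_smul' (c : ℂ) (X : Matrix (Fin n) (Fin p) ℂ) :
    frobNorm (c • X) = ‖c‖ * frobNorm X := by
  unfold frobNorm
  rw [← Real.sqrt_sq (norm_nonneg c), ← Real.sqrt_mul (sq_nonneg _)]
  congr 1
  rw [Finset.mul_sum]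
  refine Finset.sum_congr rfl fun i _ => ?_
  rw [Finset.mul_sum]
  refine Finset.sum_congr rfl fun j _ => ?_
  simp [Complex.normSq_mul, Complex.sq_norm]

private lemma frobInner_smul_left' (c : ℂ) (X Y : Matrix (Fin n) (Fin p) ℂ) :
    frobInner (c • X) Y = c * frobInner X Y := by
  rw [frobInner_eq', frobInner_eq', Finset.mul_sum]
  refine Finset.sum_congr rfl fun i _ => ?_
  rw [Finset.mul_sum]
  refine Finset.sum_congr rfl fun j _ => ?_
  simp [mul_assoc]

private lemma frobInner_smul_right' (c : ℂ) (X Y : Matrix (Fin n) (Fin p) ℂ) :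
    frobInner X (c • Y) = (starRingEnd ℂ) c * frobInner X Y := by
  rw [frobInner_eq', frobInner_eq', Finset.mul_sum]
  refine Finset.sum_congr rfl fun i _ => ?_
  rw [Finset.mul_sum]
  refine Finset.sum_congr rfl fun j _ => ?_
  simp only [Matrix.smul_apply, smul_eq_mul, _root_.map_mul]
  ring

private lemma frobNorm_add_sq' (X Y : Matrix (Fin n) (Fin p) ℂ) :
    frobNorm (X + Y) ^ 2 = frobNorm X ^ 2 + frobNorm Y ^ 2 + 2 * (frobInner X Y).re := by
  rw [frobNorm_sq', frobNorm_sq', frobNorm_sq', frobInner_eq', Complex.re_sum, Finset.mul_sum,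
    ← Finset.sum_add_distrib, ← Finset.sum_add_distrib]
  refine Finset.sum_congr rfl fun i _ => ?_
  rw [Complex.re_sum, Finset.mul_sum, ← Finset.sum_add_distrib, ← Finset.sum_add_distrib]
  refine Finset.sum_congr rfl fun j _ => ?_
  simp only [Matrix.add_apply, Complex.normSq_apply, Complex.add_re, Complex.add_im,
    Complex.mul_re, Complex.conj_re, Complex.conj_im]
  ring

private lemma pol' (u v : Fin m → ℂ) :
    ∑ i, Complex.normSq (u i + v i) - ∑ i, Complex.normSq (u i - v i)
      = 4 * (∑ i, u i * (starRingEnd ℂ) (v i)).re := by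
  rw [Complex.re_sum, Finset.mul_sum, ← Finset.sum_sub_distrib]
  refine Finset.sum_congr rfl fun i _ => ?_
  simp only [Complex.normSq_apply, Complex.add_re, Complex.add_im, Complex.sub_re,
    Complex.sub_im, Complex.mul_re, Complex.conj_re, Complex.conj_im]
  ring

private lemma rank_smul_le' (c : ℂ) (A : Matrix (Fin n) (Fin p) ℂ) :
    (c • A).rank ≤ A.rank := by
  apply Submodule.finrank_mono
  rintro x ⟨y, rfl⟩
  exact ⟨c • y, by simp [Matrix.mulVecLin_apply, Matrix.smul_mulVec, Matrix.mulVec_smul]⟩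

private lemma rank_smul' (c : ℂ) (hc : c ≠ 0) (A : Matrix (Fin n) (Fin p) ℂ) :
    (c • A).rank = A.rank := by
  refine le_antisymm (rank_smul_le' c A) ?_
  have := rank_smul_le' c⁻¹ (c • A)
  rwa [smul_smul, inv_mul_cancel₀ hc, one_smul] at this

private lemma rank_add_le' (A B : Matrix (Fin n) (Fin p) ℂ) :
    (A + B).rank ≤ A.rank + B.rank := by
  have h : LinearMap.range (A + B).mulVecLin ≤
      LinearMap.range A.mulVecLin ⊔ LinearMap.range B.mulVecLin := by
    rintro x ⟨y, rfl⟩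
    have hy : (A + B).mulVecLin y = A.mulVecLin y + B.mulVecLin y := by
      simp [Matrix.mulVecLin_apply, Matrix.add_mulVec]
    rw [hy]
    exact Submodule.add_mem_sup ⟨y, rfl⟩ ⟨y, rfl⟩
  calc (A + B).rank ≤ Module.finrank ℂ
        (LinearMap.range A.mulVecLin ⊔ LinearMap.range B.mulVecLin : Submodule ℂ (Fin n → ℂ)) :=
        Submodule.finrank_mono h
    _ ≤ A.rank + B.rank := Submodule.finrank_add_le_finrank_add_finrank _ _

end Aux

/-- near-orthogonality of images of orthogonal low-rank matrices under RIP. -/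
theorem statement13 {n p m : ℕ} (hnp : n ≤ p)
    (S : Matrix (Fin n) (Fin p) ℂ →ₗ[ℂ] (Fin m → ℂ)) (k : ℕ) (hδ : 0 < ripConst S k)
    (X Y : Matrix (Fin n) (Fin p) ℂ)
    (hrank : X.rank + Y.rank ≤ k) (horth : frobInner X Y = 0) :
    ‖∑ i, S X i * (starRingEnd ℂ) (S Y i)‖ ≤
      ripConst S k * (frobNorm X * frobNorm Y) := by
  classical
  have hδs : ripConst S k = sInf {δ : ℝ | 0 ≤ δ ∧ ∀ X : Matrix (Fin n) (Fin p) ℂ, X.rank ≤ k →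
      (1 - δ) * frobNorm X ^ 2 ≤ ∑ i, Complex.normSq (S X i) ∧
        ∑ i, Complex.normSq (S X i) ≤ (1 + δ) * frobNorm X ^ 2} := rfl
  set s : Set ℝ := {δ : ℝ | 0 ≤ δ ∧ ∀ X : Matrix (Fin n) (Fin p) ℂ, X.rank ≤ k →
      (1 - δ) * frobNorm X ^ 2 ≤ ∑ i, Complex.normSq (S X i) ∧
        ∑ i, Complex.normSq (S X i) ≤ (1 + δ) * frobNorm X ^ 2} with hsdef
  have hne : s.Nonempty := by
    by_contra h
    rw [Set.not_nonempty_iff_eq_empty] at h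
    rw [hδs, h, Real.sInf_empty] at hδ
    exact lt_irrefl 0 hδ
  have hmem : ∀ ε : ℝ, 0 < ε → ripConst S k + ε ∈ s := by
    intro ε hε
    obtain ⟨x, hx, hlt⟩ := Real.lt_sInf_add_pos hne hε
    rw [← hδs] at hlt
    refine ⟨by linarith [hδ], fun Z hZ => ?_⟩
    obtain ⟨h1, h2⟩ := hx.2 Z hZ
    have hnn : (0:ℝ) ≤ frobNorm Z ^ 2 := sq_nonneg _
    constructor
    · nlinarith
    · nlinarith
  by_cases hX0 : frobNorm X = 0
  · have : X = 0 := frobNorm_eq_zero' hX0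
    subst this
    simp [hX0, map_zero]
  by_cases hY0 : frobNorm Y = 0
  · have : Y = 0 := frobNorm_eq_zero' hY0
    subst this
    simp [hY0, map_zero]
  set T : ℂ := ∑ i, S X i * (starRingEnd ℂ) (S Y i) with hTdef
  by_cases hT0 : T = 0
  · rw [hT0, norm_zero]
    have := frobNorm_nonneg' X
    have := frobNorm_nonneg' Y
    positivity
  set a := frobNorm X with hadef
  set b := frobNorm Y with hbdef
  have ha : 0 < a := lt_of_le_of_ne (frobNorm_nonneg' X) (Ne.symm hX0)
  have hb : 0 < b := lt_of_le_of_ne (frobNorm_nonneg' Y) (Ne.symm hY0)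
  have key : ∀ ε : ℝ, 0 < ε → ‖T‖ ≤ (ripConst S k + ε) * (a * b) := by
    intro ε hε
    obtain ⟨hδε0, hrip⟩ := hmem ε hε
    set δ' := ripConst S k + ε with hδ'def
    have habsT : 0 < ‖T‖ := by
      exact norm_pos_iff.mpr hT0
    set c : ℂ := T / (‖T‖ : ℂ) with hcdef
    have hc1 : ‖c‖ = 1 := by
      rw [hcdef, norm_div, Complex.norm_real, Real.norm_eq_abs, abs_of_pos habsT, div_self habsT.ne']
    have hc0 : c ≠ 0 := by
      intro h
      rw [h, norm_zero] at hc1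
      norm_num at hc1
    have hT' : ((‖T‖ : ℝ) : ℂ) ≠ 0 := by exact_mod_cast habsT.ne'
    have h1 : (starRingEnd ℂ) T * T
        = ((‖T‖ : ℝ) : ℂ) * ((‖T‖ : ℝ) : ℂ) := by
      rw [mul_comm, Complex.mul_conj]
      push_cast [Complex.normSq_eq_norm_sq]
      ring
    have hcT : (starRingEnd ℂ) c * T = (‖T‖ : ℂ) := by
      rw [hcdef, map_div₀, Complex.conj_ofReal, div_mul_eq_mul_div, h1, mul_div_assoc,
        div_self hT', mul_one]
    set Z : Matrix (Fin n) (Fin p) ℂ := (b : ℂ) • X with hZdef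
    set W : Matrix (Fin n) (Fin p) ℂ := ((a : ℂ) * c) • Y with hWdef
    have hac0 : (a : ℂ) * c ≠ 0 := by
      apply mul_ne_zero _ hc0
      exact_mod_cast ha.ne'
    have hb0 : (b : ℂ) ≠ 0 := by exact_mod_cast hb.ne'
    have hrZ : Z.rank = X.rank := rank_smul' _ hb0 X
    have hrW : W.rank = Y.rank := rank_smul' _ hac0 Y
    have hnZ : frobNorm Z = b * a := by
      rw [hZdef, frobNorm_smul', Complex.norm_real, Real.norm_eq_abs, abs_of_pos hb]
    have hnW : frobNorm W = a * b := by
      rw [hWdef, frobNorm_smul', norm_mul, Complex.norm_real, Real.norm_eq_abs, abs_of_pos ha, hc1, mul_one]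
    have hiZW : frobInner Z W = 0 := by
      rw [hZdef, hWdef, frobInner_smul_left', frobInner_smul_right', horth]
      ring
    have hiZW' : frobInner Z ((-1 : ℂ) • W) = 0 := by
      rw [frobInner_smul_right', hiZW, mul_zero]
    have hsub : Z - W = Z + (-1 : ℂ) • W := by
      rw [neg_one_smul, sub_eq_add_neg]
    have hnsq : frobNorm (Z + W) ^ 2 = 2 * (a * b) ^ 2 := by
      rw [frobNorm_add_sq', hiZW, hnZ, hnW]
      simp; ring
    have hnsq' : frobNorm (Z - W) ^ 2 = 2 * (a * b) ^ 2 := by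
      rw [hsub, frobNorm_add_sq', hiZW', hnZ, frobNorm_smul']
      simp [hnW]; ring
    have hrk1 : (Z + W).rank ≤ k := by
      calc (Z + W).rank ≤ Z.rank + W.rank := rank_add_le' Z W
        _ = X.rank + Y.rank := by rw [hrZ, hrW]
        _ ≤ k := hrank
    have hrk2 : (Z - W).rank ≤ k := by
      rw [hsub]
      calc (Z + (-1 : ℂ) • W).rank ≤ Z.rank + ((-1 : ℂ) • W).rank := rank_add_le' _ _
        _ ≤ Z.rank + W.rank := by
            have := rank_smul_le' (-1 : ℂ) W
            omega
        _ = X.rank + Y.rank := by rw [hrZ, hrW]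
        _ ≤ k := hrank
    have hup := (hrip (Z + W) hrk1).2
    have hlow := (hrip (Z - W) hrk2).1
    rw [hnsq] at hup
    rw [hnsq'] at hlow
    -- polarization
    have hSsum : ∑ i, S Z i * (starRingEnd ℂ) (S W i) = ((a * b * ‖T‖ : ℝ) : ℂ) := by
      have hSZ : S Z = (b : ℂ) • S X := by rw [hZdef, _root_.map_smul]
      have hSW : S W = ((a : ℂ) * c) • S Y := by rw [hWdef, _root_.map_smul]
      rw [hSZ, hSW]
      have : ∀ i, ((b : ℂ) • S X) i * (starRingEnd ℂ) ((((a : ℂ) * c) • S Y) i)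
          = (b : ℂ) * (a : ℂ) * (starRingEnd ℂ) c * (S X i * (starRingEnd ℂ) (S Y i)) := by
        intro i
        simp only [Pi.smul_apply, smul_eq_mul, _root_.map_mul, Complex.conj_ofReal]
        ring
      rw [Finset.sum_congr rfl fun i _ => this i, ← Finset.mul_sum, ← hTdef]
      rw [mul_assoc, hcT]
      push_cast
      ring
    have hpol := pol' (S Z) (S W)
    have hadd : ∀ i, S Z i + S W i = S (Z + W) i := by
      intro i; rw [map_add]; rfl
    have hsub2 : ∀ i, S Z i - S W i = S (Z - W) i := by
      intro i; rw [map_sub]; rfl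
    simp only [hadd, hsub2] at hpol
    rw [hSsum] at hpol
    have hre : ((((a * b * ‖T‖ : ℝ)) : ℂ)).re = a * b * ‖T‖ :=
      Complex.ofReal_re _
    rw [hre] at hpol
    -- combine
    have hab : 0 < a * b := mul_pos ha hb
    nlinarith [hpol, hup, hlow, sq_nonneg (a*b)]
  have habpos : 0 < a * b := mul_pos ha hb
  refine le_of_forall_pos_le_add fun ε hε => ?_
  have := key (ε / (a * b)) (div_pos hε habpos)
  calc ‖T‖ ≤ (ripConst S k + ε / (a * b)) * (a * b) := this
    _ = ripConst S k * (a * b) + ε := by field_simp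


end IRLSM
end
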